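/- Let Q be the quiver with one vertex and r ≥ 2 loops, K algebraically closed, d ∈ ℕ, and L ≥ d. Then the variety rep_d(Λ_L) is irreducible. -/

import Mathlib

set_option maxHeartbeats 1600000

section AuxLemmas

variable {F : Type} [Field F] {rr dd : ℕ}

open Matrix Submodule

section Chain
variable (X : Fin rr → Matrix (Fin dd) (Fin dd) F)

/-- The descending chain of subspaces spanned by images of length-`k` products. -/




lemma strictUpper_prod_entry (l : List (Matrix (Fin dd) (Fin dd) F))
    (h : ∀ M ∈ l, ∀ i j : Fin dd, (j : ℕ) ≤ i → M i j = 0) :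
    ∀ i j : Fin dd, l.prod i j ≠ 0 → (i : ℕ) + l.length ≤ (j : ℕ) := by
  induction l with
  | nil =>
    intro i j hij
    simp only [List.prod_nil, List.length_nil, add_zero]
    by_contra hc
    refine hij ?_
    rw [List.prod_nil]
    exact Matrix.one_apply_ne (fun he => hc (le_of_eq (congrArg _ he)).ge)
  | cons M t ih =>
    intro i j hij
    rw [List.prod_cons, Matrix.mul_apply] at hij
    obtain ⟨k, -, hk⟩ := Finset.exists_ne_zero_of_sum_ne_zero hij
    have h1 : M i k ≠ 0 := fun h0 => hk (by rw [h0, zero_mul])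
    have h2 : t.prod k j ≠ 0 := fun h0 => hk (by rw [h0, mul_zero])
    have hik : (i : ℕ) < k := by
      by_contra hc
      exact h1 (h M (List.mem_cons_self) i k (by omega))
    have := ih (fun M hM => h M (List.mem_cons_of_mem _ hM)) k j h2
    simp only [List.length_cons]
    omega

lemma strictUpper_prod_zero (l : List (Matrix (Fin dd) (Fin dd) F))
    (h : ∀ M ∈ l, ∀ i j : Fin dd, (j : ℕ) ≤ i → M i j = 0) (hlen : dd ≤ l.length) :
    l.prod = 0 := by
  ext i j
  by_contra hc
  have := strictUpper_prod_entry l h i j hc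
  have := j.isLt
  omega

def Uc : ℕ → Submodule F (Fin dd → F)
  | 0 => ⊤
  | k + 1 => ⨆ v : Fin rr, (Uc k).map (X v).mulVecLin

lemma Uc_succ_le (k : ℕ) : Uc X (k + 1) ≤ Uc X k := by
  induction k with
  | zero => exact le_top
  | succ k ih =>
    show (⨆ v : Fin rr, _) ≤ _
    exact iSup_le fun v => le_trans (Submodule.map_mono ih) (le_iSup (fun v : Fin rr => (Uc X k).map (X v).mulVecLin) v)

lemma Uc_le_words (k : ℕ) :
    Uc X k ≤ ⨆ w : Fin k → Fin rr, LinearMap.range ((List.ofFn fun j => X (w j)).prod).mulVecLin := by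
  induction k with
  | zero =>
    refine le_trans ?_ (le_iSup _ (fun j => j.elim0))
    simp [Matrix.mulVecLin_one]
  | succ k ih =>
    refine iSup_le fun v => le_trans (Submodule.map_mono ih) ?_
    rw [Submodule.map_iSup]
    refine iSup_le fun w => ?_
    rw [← LinearMap.range_comp, ← Matrix.mulVecLin_mul]
    refine le_trans (le_of_eq ?_) (le_iSup _ (Fin.cons v w))
    congr 1
    rw [List.ofFn_succ, List.prod_cons]
    simp [Fin.cons_succ]

lemma Uc_L_eq_bot (L : ℕ)
    (hX : ∀ w : Fin L → Fin rr, (List.ofFn fun j => X (w j)).prod = 0) :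
    Uc X L = ⊥ := by
  refine le_bot_iff.mp (le_trans (Uc_le_words X L) ?_)
  refine iSup_le fun w => ?_
  rw [hX w]
  simp

lemma Uc_map_le (v : Fin rr) (k : ℕ) :
    (Uc X k).map (X v).mulVecLin ≤ Uc X (k + 1) :=
  le_iSup (fun v : Fin rr => (Uc X k).map (X v).mulVecLin) v

end Chain

section BasisChain
variable {V : Type} [AddCommGroup V] [Module F V]

lemma exists_basis_chain (W : ℕ → Submodule F V) (hW : Monotone W) (hW0 : W 0 = ⊥) (m : ℕ) :
    ∃ B : ℕ → Set V,
      B 0 = ∅ ∧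
      (∀ k, k < m → B k ⊆ B (k + 1)) ∧
      (∀ k, k ≤ m → B k ⊆ (W k : Set V) ∧ (W k : Set V) ⊆ span F (B k)) ∧
      LinearIndependent F ((↑) : B m → V) := by
  induction m with
  | zero =>
    refine ⟨fun _ => ∅, rfl, fun k hk => absurd hk (Nat.not_lt_zero k), ?_, linearIndependent_empty F V⟩
    intro k hk
    rw [Nat.le_zero.mp hk, hW0]
    refine ⟨Set.empty_subset _, fun x hx => ?_⟩
    simp only [SetLike.mem_coe, Submodule.mem_bot] at hx
    rw [hx]
    exact Submodule.zero_mem _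
  | succ m ih =>
    obtain ⟨B, hB0, hBmono, hBk, hBli⟩ := ih
    have hsub : B m ⊆ (W (m + 1) : Set V) :=
      (hBk m le_rfl).1.trans (hW (Nat.le_succ m))
    obtain ⟨B', hB't, hBB', hspan', hli'⟩ := exists_linearIndepOn_id_extension hBli hsub
    refine ⟨fun k => if k ≤ m then B k else B', by simp [hB0], ?_, ?_, ?_⟩
    · intro k hk
      rcases Nat.lt_or_ge k m with h | h
      · simp only [if_pos h.le, if_pos (Nat.succ_le_of_lt h)]
        exact hBmono k h
      · have hkm : k = m := le_antisymm (Nat.lt_succ_iff.mp hk) h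
        subst hkm
        simp only [le_refl, if_pos, if_neg (Nat.not_succ_le_self k)]
        exact hBB'
    · intro k hk
      rcases Nat.lt_or_ge k (m + 1) with h | h
      · have h' : k ≤ m := Nat.lt_succ_iff.mp h
        simp only [if_pos h']
        exact hBk k h'
      · have hkm : k = m + 1 := le_antisymm hk h
        subst hkm
        simp only [if_neg (Nat.not_succ_le_self m)]
        exact ⟨hB't, hspan'⟩
    · show LinearIndependent F ((↑) : (if m + 1 ≤ m then B (m + 1) else B' : Set V) → V)
      rw [if_neg (Nat.not_succ_le_self m)]
      exact hli'

end BasisChain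

lemma exists_triangularization (X : Fin rr → Matrix (Fin dd) (Fin dd) F) (L : ℕ) (hL : dd ≤ L)
    (hX : ∀ w : Fin L → Fin rr, (List.ofFn fun j => X (w j)).prod = 0) :
    ∃ g gi : Matrix (Fin dd) (Fin dd) F, ∃ N : Fin rr → Matrix (Fin dd) (Fin dd) F,
      g * gi = 1 ∧ gi * g = 1 ∧
      (∀ v (i j : Fin dd), (j : ℕ) ≤ (i : ℕ) → N v i j = 0) ∧
      (∀ v, X v = g * N v * gi) := by
  classical
  -- the increasing chain
  set V := (Fin dd → F)
  have hUanti : ∀ a b : ℕ, a ≤ b → Uc X b ≤ Uc X a :=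
    fun a b h => antitone_nat_of_succ_le (Uc_succ_le X) h
  set W : ℕ → Submodule F V := fun k => Uc X (L - k) with hWdef
  have hWmono : Monotone W := fun a b hab => hUanti _ _ (Nat.sub_le_sub_left hab L)
  have hW0 : W 0 = ⊥ := by
    show Uc X (L - 0) = ⊥
    rw [Nat.sub_zero]
    exact Uc_L_eq_bot X L hX
  obtain ⟨B, hB0, hBmono, hBk, hBli⟩ := exists_basis_chain W hWmono hW0 L
  -- chain monotone
  have hchain : ∀ b' : ℕ, b' ≤ L → ∀ a, a ≤ b' → B a ⊆ B b' := by
    intro b'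
    induction b' with
    | zero => intro _ a ha; rw [Nat.le_zero.mp ha]
    | succ n ihn =>
      intro hn a ha
      rcases Nat.lt_or_ge a (n + 1) with h | h
      · exact (ihn (le_trans (Nat.le_succ n) hn) a (Nat.lt_succ_iff.mp h)).trans
          (hBmono n (by omega))
      · rw [le_antisymm ha h]
  -- B L spans
  have hspan_top : ⊤ ≤ Submodule.span F (Set.range ((↑) : B L → V)) := by
    rw [Subtype.range_coe]
    intro x _
    have hWL : W L = ⊤ := by
      show Uc X (L - L) = ⊤
      rw [Nat.sub_self]
      rfl
    exact (hBk L le_rfl).2 (by rw [hWL]; trivial)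
  let b0 : Module.Basis (B L) F V := Module.Basis.mk hBli hspan_top
  haveI : Fintype (B L) := FiniteDimensional.fintypeBasisIndex b0
  have hcard : Fintype.card (B L) = dd := by
    rw [← Module.finrank_eq_card_basis b0, Module.finrank_fin_fun]
  -- level function
  have hexlvl : ∀ β : B L, ∃ k, (β : V) ∈ B k := fun β => ⟨L, β.2⟩
  let lvl : B L → ℕ := fun β => Nat.find (hexlvl β)
  have hlvl_mem : ∀ β, (β : V) ∈ B (lvl β) := fun β => Nat.find_spec (hexlvl β)
  have hlvl_le : ∀ β, lvl β ≤ L := fun β => Nat.find_le β.2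
  have hlvl_pos : ∀ β, 1 ≤ lvl β := by
    intro β
    rcases Nat.eq_zero_or_pos (lvl β) with h | h
    · exfalso
      have := hlvl_mem β
      rw [h, hB0] at this
      exact this
    · exact h
  have hlvl_min : ∀ (β : B L) (k), (β : V) ∈ B k → lvl β ≤ k :=
    fun β k hk => Nat.find_le hk
  -- image of basis vectors under the maps
  have hTmem : ∀ (v : Fin rr) (β : B L),
      (X v).mulVecLin (β : V) ∈ Submodule.span F (B (lvl β - 1)) := by
    intro v β
    have h1 : (β : V) ∈ W (lvl β) := (hBk (lvl β) (hlvl_le β)).1 (hlvl_mem β)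
    have h2 : (X v).mulVecLin (β : V) ∈ Uc X (L - lvl β + 1) :=
      Uc_map_le X v (L - lvl β) (Submodule.mem_map_of_mem h1)
    have h3 : L - lvl β + 1 = L - (lvl β - 1) := by
      have := hlvl_le β; have := hlvl_pos β; omega
    rw [h3] at h2
    exact (hBk (lvl β - 1) (by have := hlvl_le β; omega)).2 h2
  -- linear order on B L
  let e : B L ≃ Fin dd := Fintype.equivFinOfCardEq hcard
  let key : B L → ℕ := fun β => lvl β * dd + (e β : ℕ)
  have hkey_inj : Function.Injective key := by
    intro β γ h
    have h1 : ((e β : Fin dd) : ℕ) < dd := (e β).isLt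
    have h2 : ((e γ : Fin dd) : ℕ) < dd := (e γ).isLt
    have h3 : lvl β = lvl γ := by
      rcases Nat.lt_trichotomy (lvl β) (lvl γ) with hlt | heq | hgt
      · exfalso; simp only [key] at h; nlinarith
      · exact heq
      · exfalso; simp only [key] at h; nlinarith
    have h4 : (e β : ℕ) = (e γ : ℕ) := by simp only [key, h3] at h; omega
    exact e.injective (Fin.val_injective h4)
  have hkey_lvl : ∀ β γ : B L, lvl β < lvl γ → key β < key γ := by
    intro β γ h
    have h1 : ((e β : Fin dd) : ℕ) < dd := (e β).isLt
    simp only [key]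
    nlinarith
  letI : LinearOrder (B L) := LinearOrder.lift' key hkey_inj
  have hlt_iff : ∀ β γ : B L, β < γ ↔ key β < key γ := fun _ _ => Iff.rfl
  let iso : Fin dd ≃o (B L) := monoEquivOfFin (B L) hcard
  let b : Module.Basis (Fin dd) F V := b0.reindex iso.symm.toEquiv
  have hb : ∀ j, b j = ((iso j : B L) : V) := by
    intro j
    simp only [b, Module.Basis.reindex_apply, OrderIso.toEquiv_symm, OrderIso.symm_symm]
    exact Module.Basis.mk_apply hBli hspan_top (iso j)
  have hmem_span : ∀ (v : Fin rr) (j : Fin dd),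
      (X v).mulVecLin (b j) ∈ Submodule.span F (b '' Set.Iio j) := by
    intro v j
    rw [hb]
    have hsub : B (lvl (iso j) - 1) ⊆ b '' Set.Iio j := by
      intro γ hγ
      have hγL : γ ∈ B L :=
        hchain L le_rfl (lvl (iso j) - 1) (by have := hlvl_le (iso j); omega) hγ
      have hlvlγ : lvl ⟨γ, hγL⟩ ≤ lvl (iso j) - 1 := hlvl_min ⟨γ, hγL⟩ _ hγ
      have hlt : (⟨γ, hγL⟩ : B L) < iso j :=
        (hlt_iff _ _).mpr (hkey_lvl _ _ (by have := hlvl_pos (iso j); omega))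
      refine ⟨iso.symm ⟨γ, hγL⟩, ?_, ?_⟩
      · have h5 : iso.symm ⟨γ, hγL⟩ < iso.symm (iso j) := iso.symm.strictMono hlt
        rw [OrderIso.symm_apply_apply] at h5
        exact h5
      · rw [hb]
        simp only [OrderIso.apply_symm_apply]
    exact Submodule.span_mono hsub (hTmem v (iso j))
  clear_value b0
  obtain ⟨c, hc⟩ : ∃ c : Module.Basis (Fin dd) F V, ∀ (v : Fin rr) (j : Fin dd),
      (X v).mulVecLin (c j) ∈ Submodule.span F (⇑c '' Set.Iio j) := ⟨b, hmem_span⟩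
  clear hmem_span hb
  -- matrices
  set std : Module.Basis (Fin dd) F V := Pi.basisFun F (Fin dd) with hstd
  have hggi : std.toMatrix ⇑c * c.toMatrix ⇑std = 1 := Module.Basis.toMatrix_mul_toMatrix_flip std c
  have hgig : c.toMatrix ⇑std * std.toMatrix ⇑c = 1 := Module.Basis.toMatrix_mul_toMatrix_flip c std
  refine ⟨std.toMatrix ⇑c, c.toMatrix ⇑std,
    fun v => c.toMatrix ⇑std * X v * std.toMatrix ⇑c, hggi, hgig, ?_, ?_⟩
  · intro v i j hij
    have h1 : LinearMap.toMatrix std std ((X v).mulVecLin) = X v := by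
      rw [← Matrix.toLin'_apply' (X v), ← Matrix.toLin_eq_toLin']
      exact LinearMap.toMatrix_toLin std std (X v)
    have hNv : c.toMatrix ⇑std * X v * std.toMatrix ⇑c
        = LinearMap.toMatrix c c (X v).mulVecLin := by
      conv_lhs => rw [← h1]
      exact basis_toMatrix_mul_linearMap_toMatrix_mul_basis_toMatrix c std c std _
    beta_reduce
    rw [hNv, LinearMap.toMatrix_apply]
    have hsp := hc v j
    rw [Module.Basis.mem_span_image] at hsp
    by_contra h0
    have hi : i ∈ (c.repr ((X v).mulVecLin (c j))).support := Finsupp.mem_support_iff.mpr h0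
    have h2 := hsp hi
    rw [Set.mem_Iio, Fin.lt_iff_val_lt_val] at h2
    omega
  · intro v
    beta_reduce
    symm
    simp only [← Matrix.mul_assoc]
    rw [hggi, one_mul, Matrix.mul_assoc, hggi, mul_one]

lemma conj_list_prod (g : Matrix (Fin dd) (Fin dd) F) (t : List (Matrix (Fin dd) (Fin dd) F)) :
    ∀ N : Matrix (Fin dd) (Fin dd) F,
    ((N :: t).map fun M => g * M * g.adjugate).prod
      = g.det ^ t.length • (g * (N :: t).prod * g.adjugate) := by
  induction t with
  | nil => intro N; simp
  | cons N' t ih =>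
    intro N
    rw [List.map_cons, List.prod_cons, ih N']
    rw [mul_smul_comm]
    have hkey : (g * N * g.adjugate) * (g * (N' :: t).prod * g.adjugate)
        = g.det • (g * (N * (N' :: t).prod) * g.adjugate) := by
      have h1 : g.adjugate * (g * ((N' :: t).prod * g.adjugate))
          = g.det • ((N' :: t).prod * g.adjugate) := by
        rw [← Matrix.mul_assoc, Matrix.adjugate_mul, Matrix.smul_mul, one_mul]
      calc (g * N * g.adjugate) * (g * (N' :: t).prod * g.adjugate)
          = g * (N * (g.adjugate * (g * ((N' :: t).prod * g.adjugate)))) := by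
            simp only [Matrix.mul_assoc]
        _ = g * (N * (g.det • ((N' :: t).prod * g.adjugate))) := by rw [h1]
        _ = g.det • (g * (N * (N' :: t).prod) * g.adjugate) := by
            rw [mul_smul_comm, mul_smul_comm]
            simp only [Matrix.mul_assoc]
    rw [hkey, smul_smul, ← pow_succ]
    simp only [List.prod_cons, List.length_cons, Matrix.mul_assoc]

lemma my_eval_bind₁ {σ τ : Type} (x : τ → F) (g : σ → MvPolynomial τ F)
    (p : MvPolynomial σ F) :
    MvPolynomial.eval x (MvPolynomial.bind₁ g p)
      = MvPolynomial.eval (fun i => MvPolynomial.eval x (g i)) p := by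
  have h := MvPolynomial.aeval_bind₁ (R := F) (S := F) x g p
  simpa [MvPolynomial.aeval_def, Algebra.algebraMap_self, MvPolynomial.eval₂_id] using h

lemma map_word_prod {ι : Type} (σ : ι → F) {n : ℕ}
    (G : Fin n → Matrix (Fin dd) (Fin dd) (MvPolynomial ι F)) :
    ((List.ofFn G).prod).map (MvPolynomial.eval σ)
      = (List.ofFn fun j => (G j).map (MvPolynomial.eval σ)).prod := by
  have h := map_list_prod ((MvPolynomial.eval σ).mapMatrix (m := Fin dd)) (List.ofFn G)
  rw [List.map_ofFn] at h
  simpa [RingHom.mapMatrix_apply, Function.comp_def] using h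

end AuxLemmas

variable (K : Type) [Field K] (r d : ℕ)

/-- Zariski-closed subsets of the space of `r`-tuples of `d×d` matrices: common zero sets of
families of polynomials in the matrix entries. -/
def ZClosed (S : Set (Fin r → Matrix (Fin d) (Fin d) K)) : Prop :=
  ∃ I : Set (MvPolynomial (Fin r × Fin d × Fin d) K),
    S = {X | ∀ f ∈ I, MvPolynomial.eval (fun v => X v.1 v.2.1 v.2.2) f = 0}

/-- Irreducibility of a subset with respect to Zariski-closed coverings. -/
def ZIrred (C : Set (Fin r → Matrix (Fin d) (Fin d) K)) : Prop :=
  C.Nonempty ∧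
    ∀ C₁ C₂, ZClosed K r d C₁ → ZClosed K r d C₂ → C ⊆ C₁ ∪ C₂ → C ⊆ C₁ ∨ C ⊆ C₂

section MapDefs
variable {F : Type} [Field F] {rr dd : ℕ}

/-- Index type for the domain affine space: entries of `g` plus strictly-upper entries. -/
abbrev MIdx (rr dd : ℕ) : Type := (Fin dd × Fin dd) ⊕ (Fin rr × Fin dd × Fin dd)

def gOf (p : MIdx rr dd → F) : Matrix (Fin dd) (Fin dd) F :=
  Matrix.of fun a b => p (Sum.inl (a, b))

def nOf (p : MIdx rr dd → F) (v : Fin rr) : Matrix (Fin dd) (Fin dd) F :=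
  Matrix.of fun a b => if (a : ℕ) < (b : ℕ) then p (Sum.inr (v, a, b)) else 0

def phiM (p : MIdx rr dd → F) : Fin rr → Matrix (Fin dd) (Fin dd) F :=
  fun v => gOf p * nOf p v * (gOf p).adjugate

noncomputable def Gpoly : Matrix (Fin dd) (Fin dd) (MvPolynomial (MIdx rr dd) F) :=
  Matrix.of fun a b => MvPolynomial.X (Sum.inl (a, b))

noncomputable def Npoly (v : Fin rr) : Matrix (Fin dd) (Fin dd) (MvPolynomial (MIdx rr dd) F) :=
  Matrix.of fun a b => if (a : ℕ) < (b : ℕ) then MvPolynomial.X (Sum.inr (v, a, b)) else 0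

noncomputable def qpoly (t : Fin rr × Fin dd × Fin dd) : MvPolynomial (MIdx rr dd) F :=
  ((Gpoly * Npoly t.1 * Gpoly.adjugate : Matrix (Fin dd) (Fin dd) (MvPolynomial (MIdx rr dd) F))) t.2.1 t.2.2

lemma gOf_map_eval (p : MIdx rr dd → F) :
    (Gpoly : Matrix _ _ (MvPolynomial (MIdx rr dd) F)).map (MvPolynomial.eval p) = gOf p := by
  ext a b
  simp [Gpoly, gOf, Matrix.map_apply]

lemma nOf_map_eval (p : MIdx rr dd → F) (v : Fin rr) :
    ((Npoly v : Matrix _ _ (MvPolynomial (MIdx rr dd) F)).map (MvPolynomial.eval p)) = nOf p v := by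
  ext a b
  simp [Npoly, nOf, Matrix.map_apply, apply_ite (MvPolynomial.eval p)]

lemma eval_qpoly (p : MIdx rr dd → F) (t : Fin rr × Fin dd × Fin dd) :
    MvPolynomial.eval p (qpoly t) = (phiM p t.1) t.2.1 t.2.2 := by
  have hmm : ((Gpoly : Matrix _ _ (MvPolynomial (MIdx rr dd) F)) * Npoly t.1
        * Gpoly.adjugate).map (MvPolynomial.eval p)
      = gOf p * nOf p t.1 * (gOf p).adjugate := by
    have h1 := map_mul ((MvPolynomial.eval p).mapMatrix (m := Fin dd))
      ((Gpoly : Matrix _ _ (MvPolynomial (MIdx rr dd) F)) * Npoly t.1) Gpoly.adjugate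
    have h2 := map_mul ((MvPolynomial.eval p).mapMatrix (m := Fin dd))
      (Gpoly : Matrix _ _ (MvPolynomial (MIdx rr dd) F)) (Npoly t.1)
    have h3 := RingHom.map_adjugate (MvPolynomial.eval p)
      (Gpoly : Matrix _ _ (MvPolynomial (MIdx rr dd) F))
    simp only [RingHom.mapMatrix_apply] at h1 h2 h3
    rw [h1, h2, h3, gOf_map_eval, nOf_map_eval]
  show MvPolynomial.eval p ((Gpoly * Npoly t.1 * Gpoly.adjugate
      : Matrix (Fin dd) (Fin dd) (MvPolynomial (MIdx rr dd) F)) t.2.1 t.2.2)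
    = (phiM p t.1) t.2.1 t.2.2
  rw [← Matrix.map_apply (f := ⇑(MvPolynomial.eval p)), hmm]
  rfl

end MapDefs

/-- For the quiver with one vertex and `r ≥ 2` loops, `K` algebraically
closed, and `L ≥ d`, the representation variety
`rep_d(Λ_L) = {(X_1, …, X_r) : every product of `L` of the matrices vanishes}` is an
irreducible (closed) affine variety. -/
theorem rep_local_irreducible_of_le
    [IsAlgClosed K] (L : ℕ) (hr : 2 ≤ r) (hL : d ≤ L) :
    ZClosed K r d
        {X : Fin r → Matrix (Fin d) (Fin d) K |
          ∀ w : Fin L → Fin r, (List.ofFn fun j => X (w j)).prod = 0} ∧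
    ZIrred K r d
        {X : Fin r → Matrix (Fin d) (Fin d) K |
          ∀ w : Fin L → Fin r, (List.ofFn fun j => X (w j)).prod = 0} := by
  classical
  -- evaluation of the generic word polynomials
  have hentry : ∀ (X : Fin r → Matrix (Fin d) (Fin d) K) (w : Fin L → Fin r) (i j : Fin d),
      MvPolynomial.eval (fun v : Fin r × Fin d × Fin d => X v.1 v.2.1 v.2.2)
        (((List.ofFn fun j' : Fin L => (Matrix.of fun a b =>
            (MvPolynomial.X (⟨w j', a, b⟩ : Fin r × Fin d × Fin d)
              : MvPolynomial (Fin r × Fin d × Fin d) K))).prod) i j)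
        = ((List.ofFn fun j' => X (w j')).prod) i j := by
    intro X w i j
    have hmap := map_word_prod (fun v : Fin r × Fin d × Fin d => X v.1 v.2.1 v.2.2)
      (fun j' : Fin L => (Matrix.of fun a b =>
        (MvPolynomial.X (⟨w j', a, b⟩ : Fin r × Fin d × Fin d)
          : MvPolynomial (Fin r × Fin d × Fin d) K)))
    have hGm : ∀ j' : Fin L, ((Matrix.of fun a b =>
        (MvPolynomial.X (⟨w j', a, b⟩ : Fin r × Fin d × Fin d)
          : MvPolynomial (Fin r × Fin d × Fin d) K)).map
            (MvPolynomial.eval (fun v : Fin r × Fin d × Fin d => X v.1 v.2.1 v.2.2)))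
        = X (w j') := by
      intro j'
      ext a b
      simp [Matrix.map_apply]
    rw [← Matrix.map_apply (f := ⇑(MvPolynomial.eval
      (fun v : Fin r × Fin d × Fin d => X v.1 v.2.1 v.2.2))), hmap]
    simp only [hGm]
  -- nonemptiness
  have hne : ({X : Fin r → Matrix (Fin d) (Fin d) K |
      ∀ w : Fin L → Fin r, (List.ofFn fun j => X (w j)).prod = 0}).Nonempty := by
    refine ⟨fun _ => 0, fun w => ?_⟩
    rcases Nat.eq_zero_or_pos L with hL0 | hLpos
    · subst hL0
      have hd0 : d = 0 := Nat.le_zero.mp hL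
      subst hd0
      ext i j
      exact i.elim0
    · exact List.prod_eq_zero (List.mem_ofFn.mpr ⟨⟨0, hLpos⟩, rfl⟩)
  refine ⟨?_, hne, ?_⟩
  · -- ZClosed
    refine ⟨Set.range (fun pp : (Fin L → Fin r) × Fin d × Fin d =>
      ((List.ofFn fun j' : Fin L => (Matrix.of fun a b =>
          (MvPolynomial.X (⟨pp.1 j', a, b⟩ : Fin r × Fin d × Fin d)
            : MvPolynomial (Fin r × Fin d × Fin d) K))).prod) pp.2.1 pp.2.2), ?_⟩
    ext X
    simp only [Set.mem_setOf_eq]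
    constructor
    · rintro hX f ⟨⟨w, i, j⟩, rfl⟩
      rw [hentry X w i j, hX w]
      rfl
    · intro h w
      ext i j
      have := h _ (Set.mem_range_self (⟨w, i, j⟩ : (Fin L → Fin r) × Fin d × Fin d))
      rw [hentry X w i j] at this
      rw [this]
      rfl
  · -- the covering property
    rintro C₁ C₂ ⟨I₁, rfl⟩ ⟨I₂, rfl⟩ hsubC
    by_cases hd : d = 0
    · subst hd
      obtain ⟨X0, hX0⟩ := hne
      have hall : ∀ Y : Fin r → Matrix (Fin 0) (Fin 0) K, Y = X0 := by
        intro Y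
        funext v
        ext i j
        exact i.elim0
      rcases hsubC hX0 with h | h
      · exact Or.inl (fun Y hY => by rw [hall Y]; exact h)
      · exact Or.inr (fun Y hY => by rw [hall Y]; exact h)
    · -- main case
      obtain ⟨L', rfl⟩ : ∃ L', L = L' + 1 := ⟨L - 1, by omega⟩
      have hstrictN : ∀ (p : MIdx r d → K) v (a b : Fin d), (b : ℕ) ≤ (a : ℕ) →
          nOf p v a b = 0 := by
        intro p v a b hba
        show (if (a : ℕ) < (b : ℕ) then _ else 0) = 0
        rw [if_neg (by omega)]
      -- the image of the parametrizing map lies in the variety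
      have himg : ∀ p : MIdx r d → K, phiM p ∈ {X : Fin r → Matrix (Fin d) (Fin d) K |
          ∀ w : Fin (L' + 1) → Fin r, (List.ofFn fun j => X (w j)).prod = 0} := by
        intro p w
        have hlist : (List.ofFn fun j => phiM p (w j))
            = (List.ofFn fun j : Fin (L' + 1) => nOf p (w j)).map
                (fun M => gOf p * M * (gOf p).adjugate) := by
          rw [List.map_ofFn]
          rfl
        rw [hlist, List.ofFn_succ, conj_list_prod]
        have hprodz : (nOf p (w 0) ::
            List.ofFn fun i : Fin L' => nOf p (w i.succ)).prod = 0 := by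
          apply strictUpper_prod_zero
          · intro M hM a b hba
            rcases List.mem_cons.mp hM with h | h
            · rw [h]; exact hstrictN p _ a b hba
            · obtain ⟨i, hi⟩ := List.mem_ofFn.mp h
              rw [← hi]; exact hstrictN p _ a b hba
          · simp only [List.length_cons, List.length_ofFn]
            omega
        rw [hprodz]
        simp
      -- every point of the variety is in the image
      have hsurj : ∀ X ∈ {X : Fin r → Matrix (Fin d) (Fin d) K |
          ∀ w : Fin (L' + 1) → Fin r, (List.ofFn fun j => X (w j)).prod = 0},
          ∃ p : MIdx r d → K, phiM p = X := by
        intro X hXC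
        obtain ⟨g, gi, N, hggi, hgig, hstrict, hXv⟩ :=
          exists_triangularization X (L' + 1) hL hXC
        have hdet : g.det * gi.det = 1 := by
          rw [← Matrix.det_mul, hggi, Matrix.det_one]
        obtain ⟨c, hc⟩ := IsAlgClosed.exists_pow_nat_eq (k := K) gi.det (n := d) (by omega)
        have hcne : c ≠ 0 := by
          intro h0
          rw [h0, zero_pow (by omega)] at hc
          rw [← hc, mul_zero] at hdet
          exact zero_ne_one hdet
        have hdetg' : (c • g).det = 1 := by
          rw [Matrix.det_smul, Fintype.card_fin, hc, mul_comm, hdet]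
        have h3 : (c • g) * (c⁻¹ • gi) = 1 := by
          rw [smul_mul_assoc, mul_smul_comm, smul_smul, mul_inv_cancel₀ hcne, one_smul, hggi]
        have h2 : (c • g).adjugate * (c • g) = 1 := by
          rw [Matrix.adjugate_mul, hdetg', one_smul]
        have hadj : (c • g).adjugate = c⁻¹ • gi := by
          calc (c • g).adjugate = (c • g).adjugate * ((c • g) * (c⁻¹ • gi)) := by
                rw [h3, mul_one]
            _ = ((c • g).adjugate * (c • g)) * (c⁻¹ • gi) := by rw [Matrix.mul_assoc]
            _ = c⁻¹ • gi := by rw [h2, one_mul]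
        refine ⟨Sum.elim (fun q => (c • g) q.1 q.2) (fun q => N q.1 q.2.1 q.2.2), ?_⟩
        funext v
        have hgOf : gOf (Sum.elim (fun q => (c • g) q.1 q.2)
            (fun q => N q.1 q.2.1 q.2.2) : MIdx r d → K) = c • g := by
          ext a b
          rfl
        have hnOf : nOf (Sum.elim (fun q => (c • g) q.1 q.2)
            (fun q => N q.1 q.2.1 q.2.2) : MIdx r d → K) v = N v := by
          ext a b
          show (if (a : ℕ) < (b : ℕ) then N v a b else 0) = N v a b
          by_cases hab : (a : ℕ) < (b : ℕ)
          · rw [if_pos hab]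
          · rw [if_neg hab, hstrict v a b (by omega)]
        show gOf _ * nOf _ v * (gOf _).adjugate = X v
        rw [hgOf, hnOf, hadj, smul_mul_assoc, smul_mul_assoc, mul_smul_comm, smul_smul,
          mul_inv_cancel₀ hcne, one_smul]
        exact (hXv v).symm
      -- pullback of vanishing conditions and the contradiction argument
      have hFeval : ∀ (p : MIdx r d → K) (f : MvPolynomial (Fin r × Fin d × Fin d) K),
          MvPolynomial.eval p (MvPolynomial.bind₁ (qpoly (F := K)) f)
            = MvPolynomial.eval (fun v => (phiM p v.1) v.2.1 v.2.2) f := by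
        intro p f
        rw [my_eval_bind₁]
        have hq : (fun i => MvPolynomial.eval p (qpoly (F := K) i))
            = fun v : Fin r × Fin d × Fin d => (phiM p v.1) v.2.1 v.2.2 :=
          funext (eval_qpoly p)
        rw [hq]
      by_contra hcon
      push_neg at hcon
      obtain ⟨hn1, hn2⟩ := hcon
      rw [Set.not_subset] at hn1 hn2
      obtain ⟨X₁, hX₁C, hX₁n⟩ := hn1
      obtain ⟨X₂, hX₂C, hX₂n⟩ := hn2
      simp only [Set.mem_setOf_eq, not_forall] at hX₁n hX₂n
      obtain ⟨f₁, hf₁I, hf₁n⟩ := hX₁n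
      obtain ⟨f₂, hf₂I, hf₂n⟩ := hX₂n
      obtain ⟨p₁, hp₁⟩ := hsurj X₁ hX₁C
      obtain ⟨p₂, hp₂⟩ := hsurj X₂ hX₂C
      have hzero : ∀ p : MIdx r d → K,
          MvPolynomial.eval p (MvPolynomial.bind₁ (qpoly (F := K)) f₁
            * MvPolynomial.bind₁ (qpoly (F := K)) f₂) = 0 := by
        intro p
        rw [map_mul]
        rcases hsubC (himg p) with h | h
        · exact mul_eq_zero_of_left (by rw [hFeval p f₁]; exact h f₁ hf₁I) _
        · exact mul_eq_zero_of_right _ (by rw [hFeval p f₂]; exact h f₂ hf₂I)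
      have hFz : MvPolynomial.bind₁ (qpoly (F := K)) f₁
          * MvPolynomial.bind₁ (qpoly (F := K)) f₂ = 0 := by
        apply MvPolynomial.funext
        intro x
        rw [hzero x, map_zero]
      rcases mul_eq_zero.mp hFz with h | h
      · apply hf₁n
        have h1 : MvPolynomial.eval p₁ (MvPolynomial.bind₁ (qpoly (F := K)) f₁) = 0 := by
          rw [h, map_zero]
        rw [hFeval p₁ f₁] at h1
        have hrw : (fun v : Fin r × Fin d × Fin d => (phiM p₁ v.1) v.2.1 v.2.2)
            = fun v : Fin r × Fin d × Fin d => X₁ v.1 v.2.1 v.2.2 := by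
          funext v
          rw [hp₁]
        rwa [hrw] at h1
      · apply hf₂n
        have h1 : MvPolynomial.eval p₂ (MvPolynomial.bind₁ (qpoly (F := K)) f₂) = 0 := by
          rw [h, map_zero]
        rw [hFeval p₂ f₂] at h1
        have hrw : (fun v : Fin r × Fin d × Fin d => (phiM p₂ v.1) v.2.1 v.2.2)
            = fun v : Fin r × Fin d × Fin d => X₂ v.1 v.2.1 v.2.2 := by
          funext v
          rw [hp₂]
        rwa [hrw] at h1
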